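/- For every n ∈ ℕ₀ and every connected graph G ∈ 𝒢_n, the function x ↦ J_n(G,x) is integrable on ℝ^d with ∫_{ℝ^d} J_n(G,x) dx ≤ m_φ^{n+1}. -/

import Mathlib

open MeasureTheory Finset
open scoped ENNReal Classical

noncomputable section

/-- The interior vertices `{1,…,n}` of the vertex set `{0,1,…,n+1}` (as `Fin (n+2)`). -/
def interiorVerts (n : ℕ) : Finset (Fin (n + 2)) :=
  Finset.univ.filter fun v => v ≠ 0 ∧ v ≠ Fin.last (n + 1)

/-- `ConnIn G a b S` : there is a path from `a` to `b` in `G` using only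
vertices in `S ∪ {a, b}`. -/
def ConnIn {k : ℕ} (G : SimpleGraph (Fin k)) (a b : Fin k) (S : Set (Fin k)) : Prop :=
  ∃ w : G.Walk a b, ∀ v ∈ w.support, v = a ∨ v = b ∨ v ∈ S

/-- `π_n(G) = Σ_{I ⊆ [n]} (-1)^{n-|I|} 1{0 ↔ n+1 in G|I}`. -/
def piFun (n : ℕ) (G : SimpleGraph (Fin (n + 2))) : ℤ :=
  ∑ I ∈ (interiorVerts n).powerset,
    (-1 : ℤ) ^ (n - I.card) *
      (if ConnIn G 0 (Fin.last (n + 1)) ↑I then 1 else 0)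

/-- The number of edges of `G`, counted via ordered pairs `i < j`. -/
def edgeCount {k : ℕ} (G : SimpleGraph (Fin k)) : ℕ :=
  (Finset.univ.filter fun p : Fin k × Fin k => p.1 < p.2 ∧ G.Adj p.1 p.2).card

/-- `κ_n(H) = Σ_{G ∈ 𝒢_n, E(G) ⊆ E(H)} (-1)^{|E(H)|-|E(G)|} π_n(G)`. -/
def kappaFun (n : ℕ) (H : SimpleGraph (Fin (n + 2))) : ℤ :=
  ∑ G ∈ Finset.univ.filter
      (fun G : SimpleGraph (Fin (n + 2)) => G.Connected ∧ G ≤ H),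
    (-1 : ℤ) ^ (edgeCount H - edgeCount G) * piFun n G

/-- The point configuration `x₀ = 0`, `x₁,…,x_n = xs`, `x_{n+1} = x`. -/
def pts {d n : ℕ} (x : EuclideanSpace ℝ (Fin d)) (xs : Fin n → EuclideanSpace ℝ (Fin d)) :
    Fin (n + 2) → EuclideanSpace ℝ (Fin d) :=
  Fin.cons 0 (Fin.snoc xs x)

/-- `∏_{{i,j} ∈ E(G)} φ(y_i - y_j)`, product over ordered pairs `i < j`. -/
def edgeProd {d k : ℕ} (φ : EuclideanSpace ℝ (Fin d) → ℝ)
    (G : SimpleGraph (Fin k)) (y : Fin k → EuclideanSpace ℝ (Fin d)) : ℝ :=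
  ∏ p ∈ Finset.univ.filter (fun p : Fin k × Fin k => p.1 < p.2 ∧ G.Adj p.1 p.2),
    φ (y p.1 - y p.2)

/-- `J_n(G,x) = ∫ ∏_{{i,j} ∈ E(G)} φ(x_i - x_j) d(x₁,…,x_n)` with `x₀ = 0`, `x_{n+1} = x`. -/
def Jfun {d : ℕ} (φ : EuclideanSpace ℝ (Fin d) → ℝ) (n : ℕ)
    (G : SimpleGraph (Fin (n + 2))) (x : EuclideanSpace ℝ (Fin d)) : ℝ :=
  ∫ xs : Fin n → EuclideanSpace ℝ (Fin d), edgeProd φ G (pts x xs)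

/-- `I_n(G,x) = ∫ ∏_{{i,j} ∈ E(G)} φ(x_i-x_j) ∏_{{i,j} ∉ E(G)} (1 - φ(x_i-x_j)) d(x₁,…,x_n)`. -/
def Ifun {d : ℕ} (φ : EuclideanSpace ℝ (Fin d) → ℝ) (n : ℕ)
    (G : SimpleGraph (Fin (n + 2))) (x : EuclideanSpace ℝ (Fin d)) : ℝ :=
  ∫ xs : Fin n → EuclideanSpace ℝ (Fin d),
    edgeProd φ G (pts x xs) *
      ∏ p ∈ Finset.univ.filter
          (fun p : Fin (n + 2) × Fin (n + 2) => p.1 < p.2 ∧ ¬ G.Adj p.1 p.2),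
        (1 - φ (pts x xs p.1 - pts x xs p.2))

/-- `p_n(x) = (1/n!) Σ_{H ∈ 𝒢_n} κ_n(H) J_n(H,x)`. -/
def pFun {d : ℕ} (φ : EuclideanSpace ℝ (Fin d) → ℝ) (n : ℕ)
    (x : EuclideanSpace ℝ (Fin d)) : ℝ :=
  (Nat.factorial n : ℝ)⁻¹ *
    ∑ H ∈ Finset.univ.filter (fun H : SimpleGraph (Fin (n + 2)) => H.Connected),
      (kappaFun n H : ℝ) * Jfun φ n H x


/-- Tree-integral bound: integrating out, one by one, all coordinates in `S`, where each
`v ∈ S` carries a factor `ℓ (z v - z (p v))` with `p` strictly decreasing a potential `D`,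
yields at most `M ^ S.card`. -/
lemma tree_lintegral_bound {d k : ℕ} (ℓ : EuclideanSpace ℝ (Fin d) → ℝ≥0∞)
    (hmeas : Measurable ℓ) (M : ℝ≥0∞) (hM : M ≠ ⊤)
    (hshift : ∀ c : EuclideanSpace ℝ (Fin d), ∫⁻ t, ℓ (t - c) = M)
    (p : Fin k → Fin k) (D : Fin k → ℕ) :
    ∀ S : Finset (Fin k), (∀ v ∈ S, D (p v) < D v) →
      ∀ y, (∫⋯∫⁻_S, fun z => ∏ v ∈ S, ℓ (z v - z (p v))) y ≤ M ^ S.card := by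
  intro S
  induction S using Finset.strongInduction with
  | _ S IH =>
    intro hp y
    rcases S.eq_empty_or_nonempty with rfl | hS
    · simp
    obtain ⟨v, hvS, hvmax⟩ := S.exists_max_image D hS
    have hfmeas : Measurable (fun z : Fin k → EuclideanSpace ℝ (Fin d) =>
        ∏ w ∈ S, ℓ (z w - z (p w))) :=
      Finset.measurable_prod _ fun w _ =>
        hmeas.comp ((measurable_pi_apply w).sub (measurable_pi_apply (p w)))
    have hpv : p v ≠ v := by
      intro h
      have := hp v hvS
      rw [h] at this
      exact lt_irrefl _ this
    have key : ∀ z : Fin k → EuclideanSpace ℝ (Fin d),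
        (∫⁻ t, ∏ w ∈ S, ℓ (Function.update z v t w - Function.update z v t (p w)))
          = M * ∏ w ∈ S.erase v, ℓ (z w - z (p w)) := by
      intro z
      have hsplit : ∀ t, ∏ w ∈ S, ℓ (Function.update z v t w - Function.update z v t (p w))
          = ℓ (t - z (p v)) * ∏ w ∈ S.erase v, ℓ (z w - z (p w)) := by
        intro t
        rw [← Finset.mul_prod_erase S _ hvS]
        congr 1
        · rw [Function.update_self, Function.update_of_ne hpv]
        · refine Finset.prod_congr rfl fun w hw => ?_
          have hw1 : w ≠ v := Finset.ne_of_mem_erase hw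
          have hw2 : p w ≠ v := by
            intro h
            have h1 := hp w (Finset.mem_of_mem_erase hw)
            have h2 := hvmax w (Finset.mem_of_mem_erase hw)
            rw [h] at h1
            omega
          rw [Function.update_of_ne hw1, Function.update_of_ne hw2]
      simp_rw [hsplit]
      have hmc : Measurable fun t : EuclideanSpace ℝ (Fin d) => ℓ (t - z (p v)) :=
        hmeas.comp (measurable_id.sub measurable_const)
      rw [lintegral_mul_const _ hmc, hshift]
    calc (∫⋯∫⁻_S, fun z => ∏ w ∈ S, ℓ (z w - z (p w))) y
        = (∫⋯∫⁻_(S.erase v), fun z =>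
            ∫⁻ t, ∏ w ∈ S, ℓ (Function.update z v t w - Function.update z v t (p w))) y := by
          rw [lmarginal_erase' _ hfmeas hvS]
      _ = (∫⋯∫⁻_(S.erase v), fun z => M * ∏ w ∈ S.erase v, ℓ (z w - z (p w))) y := by
          simp_rw [key]
      _ = M * (∫⋯∫⁻_(S.erase v), fun z => ∏ w ∈ S.erase v, ℓ (z w - z (p w))) y := by
          rw [lmarginal, lmarginal]
          exact lintegral_const_mul' _ _ hM
      _ ≤ M * M ^ (S.erase v).card :=
          mul_le_mul_right
            (IH _ (Finset.erase_ssubset hvS)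
              (fun w hw => hp w (Finset.mem_of_mem_erase hw)) y) M
      _ = M ^ S.card := by
          rw [Finset.card_erase_of_mem hvS, ← pow_succ']
          congr 1
          have := Finset.card_pos.mpr hS
          omega

/-- Writing the integral over `x₁,…,xₙ` (with `x₀ = 0`, `x_{n+1} = x` fixed) as a
marginal integral. -/
lemma lintegral_pts_eq_lmarginal {d n : ℕ}
    (f : (Fin (n + 2) → EuclideanSpace ℝ (Fin d)) → ℝ≥0∞) (hf : Measurable f)
    (x : EuclideanSpace ℝ (Fin d)) :
    ∫⁻ xs : Fin n → EuclideanSpace ℝ (Fin d), f (pts x xs)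
      = (∫⋯∫⁻_((Finset.univ.erase (0 : Fin (n + 2))).erase (Fin.last (n + 1))), f)
          (Function.update (fun _ => (0 : EuclideanSpace ℝ (Fin d))) (Fin.last (n + 1)) x) := by
  classical
  set T := ((Finset.univ.erase (0 : Fin (n + 2))).erase (Fin.last (n + 1))) with hT
  have hmemT : ∀ v : Fin (n + 2), v ∈ T ↔ v ≠ Fin.last (n + 1) ∧ v ≠ 0 := by
    intro v; simp [hT, Finset.mem_erase]
  have hval : ∀ v : Fin (n + 2), v ∈ T → 1 ≤ v.1 ∧ v.1 ≤ n := by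
    intro v hv
    obtain ⟨h1, h2⟩ := (hmemT v).mp hv
    have hv1 : v.1 ≠ n + 1 := fun h => h1 (Fin.ext h)
    have hv2 : v.1 ≠ 0 := fun h => h2 (Fin.ext h)
    omega
  have hm : ∀ i : Fin n, (⟨i.1 + 1, by omega⟩ : Fin (n + 2)) ∈ T := by
    intro i
    rw [hmemT]
    refine ⟨fun h => ?_, fun h => ?_⟩
    · have := congrArg Fin.val h
      simp [Fin.last] at this
      omega
    · have := congrArg Fin.val h
      simp at this
  let m : Fin n → T := fun i => ⟨⟨i.1 + 1, by omega⟩, hm i⟩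
  have hminj : Function.Injective m := by
    intro a b hab
    have : a.1 + 1 = b.1 + 1 := congrArg (fun t : T => (t : Fin (n + 2)).1) hab
    exact Fin.ext (by omega)
  have hcardT : T.card = n := by
    have h0 : (Fin.last (n + 1)) ∈ Finset.univ.erase (0 : Fin (n + 2)) := by
      refine Finset.mem_erase.mpr ⟨?_, Finset.mem_univ _⟩
      intro h
      have := congrArg Fin.val h
      simp only [Fin.val_last, Fin.val_zero] at this
      omega
    rw [hT, Finset.card_erase_of_mem h0, Finset.card_erase_of_mem (Finset.mem_univ _),
      Finset.card_univ, Fintype.card_fin]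
    omega
  have hcard : Fintype.card (Fin n) = Fintype.card T := by
    rw [Fintype.card_fin, Fintype.card_coe, hcardT]
  let e : Fin n ≃ T :=
    Equiv.ofBijective m ((Fintype.bijective_iff_injective_and_card m).mpr ⟨hminj, hcard⟩)
  have hmp : MeasurePreserving
      (MeasurableEquiv.piCongrLeft (fun _ : T => EuclideanSpace ℝ (Fin d)) e)
      (Measure.pi fun _ => volume) (Measure.pi fun _ => volume) :=
    measurePreserving_piCongrLeft (fun _ => volume) e
  set w := Function.update (fun _ => (0 : EuclideanSpace ℝ (Fin d))) (Fin.last (n + 1)) x with hw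
  have harg : ∀ xs : Fin n → EuclideanSpace ℝ (Fin d),
      Function.updateFinset w T
        ((MeasurableEquiv.piCongrLeft (fun _ : T => EuclideanSpace ℝ (Fin d)) e) xs)
        = pts x xs := by
    intro xs
    funext v
    by_cases hv : v ∈ T
    · have h1 : 1 ≤ v.1 ∧ v.1 ≤ n := hval v hv
      set i : Fin n := ⟨v.1 - 1, by omega⟩ with hi
      have hiv : i.1 = v.1 - 1 := rfl
      have hei : e i = ⟨v, hv⟩ := by
        apply Subtype.ext
        apply Fin.ext
        show i.1 + 1 = v.1
        omega
      have hpi : (MeasurableEquiv.piCongrLeft (fun _ : T => EuclideanSpace ℝ (Fin d)) e) xs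
          ⟨v, hv⟩ = xs i := by
        rw [MeasurableEquiv.coe_piCongrLeft, ← hei]
        exact Equiv.piCongrLeft_apply_apply (fun _ : T => EuclideanSpace ℝ (Fin d)) e xs i
      have hL : Function.updateFinset w T
          ((MeasurableEquiv.piCongrLeft (fun _ : T => EuclideanSpace ℝ (Fin d)) e) xs) v
          = xs i := by
        rw [Function.updateFinset]
        simp only [hv, dif_pos]
        exact hpi
      rw [hL]
      have hvs : v = Fin.succ (⟨v.1 - 1, by omega⟩ : Fin (n + 1)) := by
        apply Fin.ext
        show v.1 = (v.1 - 1) + 1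
        omega
      have hcs : (⟨v.1 - 1, by omega⟩ : Fin (n + 1)) = Fin.castSucc i := by
        apply Fin.ext
        rfl
      rw [pts, hvs, Fin.cons_succ, hcs, Fin.snoc_castSucc]
    · have hL : Function.updateFinset w T
          ((MeasurableEquiv.piCongrLeft (fun _ : T => EuclideanSpace ℝ (Fin d)) e) xs) v
          = w v := by
        rw [Function.updateFinset]
        simp only [hv, dif_neg, not_false_iff]
      rw [hL]
      have hv' : v = Fin.last (n + 1) ∨ v = 0 := by
        by_contra hcon
        push_neg at hcon
        exact hv ((hmemT v).mpr hcon)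
      rcases hv' with rfl | rfl
      · rw [hw, Function.update_self]
        have : Fin.last (n + 1) = Fin.succ (Fin.last n) := (Fin.succ_last n).symm
        rw [pts, this, Fin.cons_succ, Fin.snoc_last]
      · have h0last : (0 : Fin (n + 2)) ≠ Fin.last (n + 1) := by
          intro h
          have := congrArg Fin.val h
          simp [Fin.last] at this
        rw [hw, Function.update_of_ne h0last]
        rw [pts, Fin.cons_zero]
  calc ∫⁻ xs : Fin n → EuclideanSpace ℝ (Fin d), f (pts x xs)
      = ∫⁻ xs : Fin n → EuclideanSpace ℝ (Fin d),
          f (Function.updateFinset w T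
            ((MeasurableEquiv.piCongrLeft (fun _ : T => EuclideanSpace ℝ (Fin d)) e) xs)) := by
        refine lintegral_congr fun xs => ?_
        rw [harg xs]
    _ = ∫⁻ xs : Fin n → EuclideanSpace ℝ (Fin d),
          f (Function.updateFinset w T
            ((MeasurableEquiv.piCongrLeft (fun _ : T => EuclideanSpace ℝ (Fin d)) e) xs))
          ∂(Measure.pi fun _ => volume) := by
        rw [MeasureTheory.volume_pi]
    _ = ∫⁻ z : (i : T) → EuclideanSpace ℝ (Fin d), f (Function.updateFinset w T z)
          ∂(Measure.pi fun _ => volume) :=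
        hmp.lintegral_comp (hf.comp measurable_updateFinset)
    _ = (∫⋯∫⁻_T, f) w := rfl

/-- The product over the edges of `G` is at most the product over the "parent" edges. -/
lemma edge_prod_le_parent {d k : ℕ} (ℓ : EuclideanSpace ℝ (Fin d) → ℝ≥0∞)
    (hle1 : ∀ a, ℓ a ≤ 1) (hsym : ∀ a b : EuclideanSpace ℝ (Fin d), ℓ (a - b) = ℓ (b - a))
    (G : SimpleGraph (Fin k)) (r : Fin k) (p : Fin k → Fin k) (D : Fin k → ℕ)
    (hadj : ∀ v, v ≠ r → G.Adj v (p v))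
    (hlt : ∀ v, v ≠ r → D (p v) < D v)
    (y : Fin k → EuclideanSpace ℝ (Fin d)) :
    (∏ q ∈ Finset.univ.filter (fun q : Fin k × Fin k => q.1 < q.2 ∧ G.Adj q.1 q.2),
        ℓ (y q.1 - y q.2))
      ≤ ∏ v ∈ Finset.univ.erase r, ℓ (y v - y (p v)) := by
  classical
  set E := Finset.univ.filter (fun q : Fin k × Fin k => q.1 < q.2 ∧ G.Adj q.1 q.2) with hE
  set o : Fin k → Fin k × Fin k := fun v => if v < p v then (v, p v) else (p v, v) with ho
  have hoE : ∀ v ∈ Finset.univ.erase r, o v ∈ E := by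
    intro v hv
    have hv' : v ≠ r := Finset.ne_of_mem_erase hv
    have ha := hadj v hv'
    have hne : v ≠ p v := ha.ne
    rw [hE, Finset.mem_filter]
    refine ⟨Finset.mem_univ _, ?_⟩
    rw [ho]
    dsimp only
    split_ifs with h
    · exact ⟨h, ha⟩
    · exact ⟨lt_of_le_of_ne (not_lt.mp h) (fun hh => hne hh.symm), ha.symm⟩
  have hinj : ∀ a ∈ Finset.univ.erase r, ∀ b ∈ Finset.univ.erase r, o a = o b → a = b := by
    intro a ha b hb hab
    have ha' := Finset.ne_of_mem_erase ha
    have hb' := Finset.ne_of_mem_erase hb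
    have hlta := hlt a ha'
    have hltb := hlt b hb'
    rw [ho] at hab
    dsimp only at hab
    split_ifs at hab with hc1 hc2 hc2 <;> injection hab with h1 h2
    · rw [← h1] at hltb
      rw [h2] at hlta
      omega
    · rw [h1] at hlta
      rw [← h2] at hltb
      omega
  have hsub : Finset.image o (Finset.univ.erase r) ⊆ E := by
    intro q hq
    obtain ⟨v, hv, rfl⟩ := Finset.mem_image.mp hq
    exact hoE v hv
  calc ∏ q ∈ E, ℓ (y q.1 - y q.2)
      = (∏ q ∈ E \ Finset.image o (Finset.univ.erase r), ℓ (y q.1 - y q.2)) *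
          ∏ q ∈ Finset.image o (Finset.univ.erase r), ℓ (y q.1 - y q.2) :=
        (Finset.prod_sdiff hsub).symm
    _ ≤ 1 * ∏ q ∈ Finset.image o (Finset.univ.erase r), ℓ (y q.1 - y q.2) :=
        mul_le_mul_left (Finset.prod_le_one (fun _ _ => zero_le) fun q _ => hle1 _) _
    _ = ∏ v ∈ Finset.univ.erase r, ℓ (y (o v).1 - y (o v).2) := by
        rw [one_mul, Finset.prod_image hinj]
    _ = ∏ v ∈ Finset.univ.erase r, ℓ (y v - y (p v)) := by
        refine Finset.prod_congr rfl fun v hv => ?_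
        rw [ho]
        dsimp only
        split_ifs with h
        · rfl
        · exact hsym _ _

/-- For connected `G ∈ 𝒢_n`, the function `x ↦ J_n(G,x)` is integrable with
`∫ J_n(G,x) dx ≤ m_φ^{n+1}`. -/
theorem Jfun_integrable_and_bound
    {d : ℕ} (hd : 1 ≤ d) (φ : EuclideanSpace ℝ (Fin d) → ℝ)
    (hφmeas : Measurable φ) (hφrange : ∀ x, φ x ∈ Set.Icc (0 : ℝ) 1)
    (hφsymm : ∀ x, φ (-x) = φ x)
    (hφint : Integrable φ) (hφpos : 0 < ∫ x, φ x)
    (n : ℕ) (G : SimpleGraph (Fin (n + 2))) (hG : G.Connected) :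
    Integrable (Jfun φ n G) ∧ (∫ x, Jfun φ n G x) ≤ (∫ x, φ x) ^ (n + 1) := by
  classical
  -- a "parent" function decreasing the distance to the root `0`
  have hpar : ∀ v : Fin (n + 2), v ≠ 0 → ∃ u, G.Adj v u ∧ G.dist 0 u < G.dist 0 v := by
    intro v hv
    obtain ⟨w, hw⟩ := hG.exists_walk_length_eq_dist 0 v
    obtain ⟨u, hadj, w', hw'⟩ := SimpleGraph.Walk.exists_eq_cons_of_ne hv w.reverse
    refine ⟨u, hadj, ?_⟩
    have h1 : G.dist 0 u ≤ w'.reverse.length := SimpleGraph.dist_le _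
    have h2 : w.reverse.length = w.length := SimpleGraph.Walk.length_reverse _
    have h3 : w.reverse.length = w'.length + 1 := by rw [hw']; simp
    have h4 : w'.reverse.length = w'.length := SimpleGraph.Walk.length_reverse _
    omega
  choose! par hadjpar hltpar using hpar
  set m := ∫ x, φ x with hm
  have hm0 : (0 : ℝ) ≤ m := le_of_lt hφpos
  set ℓ : EuclideanSpace ℝ (Fin d) → ℝ≥0∞ := fun a => ENNReal.ofReal (φ a) with hℓ
  have hℓmeas : Measurable ℓ := ENNReal.measurable_ofReal.comp hφmeas
  have hℓle1 : ∀ a, ℓ a ≤ 1 := fun a => by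
    rw [hℓ]; exact ENNReal.ofReal_le_one.mpr (hφrange a).2
  have hℓsym : ∀ a b, ℓ (a - b) = ℓ (b - a) := by
    intro a b
    rw [hℓ]
    dsimp only
    rw [show a - b = -(b - a) by rw [neg_sub], hφsymm]
  set M : ℝ≥0∞ := ENNReal.ofReal m with hMdef
  have hMne : M ≠ ⊤ := ENNReal.ofReal_ne_top
  have hMint : ∫⁻ a, ℓ a = M := by
    rw [hMdef, hm,
      ofReal_integral_eq_lintegral_ofReal hφint
        (Filter.Eventually.of_forall fun x => (hφrange x).1)]
  have hshift : ∀ c, ∫⁻ t, ℓ (t - c) = M := by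
    intro c
    rw [← hMint]
    simp_rw [sub_eq_add_neg]
    exact lintegral_add_right_eq_self ℓ (-c)
  set F : (Fin (n + 2) → EuclideanSpace ℝ (Fin d)) → ℝ≥0∞ := fun y =>
    ∏ q ∈ Finset.univ.filter (fun q : Fin (n + 2) × Fin (n + 2) => q.1 < q.2 ∧ G.Adj q.1 q.2),
      ℓ (y q.1 - y q.2) with hF
  have hFmeas : Measurable F := Finset.measurable_prod _ fun q _ =>
    hℓmeas.comp ((measurable_pi_apply q.1).sub (measurable_pi_apply q.2))
  set P : (Fin (n + 2) → EuclideanSpace ℝ (Fin d)) → ℝ≥0∞ := fun y =>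
    ∏ v ∈ Finset.univ.erase (0 : Fin (n + 2)), ℓ (y v - y (par v)) with hP
  have hPmeas : Measurable P := Finset.measurable_prod _ fun v _ =>
    hℓmeas.comp ((measurable_pi_apply v).sub (measurable_pi_apply (par v)))
  have hFP : ∀ y, F y ≤ P y := fun y =>
    edge_prod_le_parent ℓ hℓle1 hℓsym G 0 par (G.dist 0)
      (fun v hv => hadjpar v hv) (fun v hv => hltpar v hv) y
  have hFofReal : ∀ y, ENNReal.ofReal (edgeProd φ G y) = F y := by
    intro y
    rw [edgeProd, hF, ENNReal.ofReal_prod_of_nonneg fun q _ => (hφrange _).1]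
  have hpts : Measurable
      (fun q : EuclideanSpace ℝ (Fin d) × (Fin n → EuclideanSpace ℝ (Fin d)) =>
        pts q.1 q.2) := by
    rw [measurable_pi_iff]
    intro v
    refine Fin.cases ?_ (fun j => ?_) v
    · simp only [pts, Fin.cons_zero]
      exact measurable_const
    · simp only [pts, Fin.cons_succ]
      refine Fin.lastCases ?_ (fun i => ?_) j
      · simp only [Fin.snoc_last]
        exact measurable_fst
      · simp only [Fin.snoc_castSucc]
        exact (measurable_pi_apply i).comp measurable_snd
  set g : EuclideanSpace ℝ (Fin d) → ℝ≥0∞ := fun x => ∫⁻ xs, F (pts x xs) with hg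
  have hgmeas : Measurable g := Measurable.lintegral_prod_right' (hFmeas.comp hpts)
  have hepm : Measurable fun y : Fin (n + 2) → EuclideanSpace ℝ (Fin d) => edgeProd φ G y := by
    unfold edgeProd
    exact Finset.measurable_prod _ fun q _ =>
      hφmeas.comp ((measurable_pi_apply q.1).sub (measurable_pi_apply q.2))
  have hJ : ∀ x, Jfun φ n G x = (g x).toReal := by
    intro x
    have hmx : Measurable fun xs : Fin n → EuclideanSpace ℝ (Fin d) =>
        edgeProd φ G (pts x xs) := hepm.comp (hpts.comp measurable_prodMk_left)
    have hnn : (0 : (Fin n → EuclideanSpace ℝ (Fin d)) → ℝ)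
        ≤ᵐ[volume] fun xs => edgeProd φ G (pts x xs) :=
      Filter.Eventually.of_forall fun xs => by
        unfold edgeProd
        exact Finset.prod_nonneg fun q _ => (hφrange _).1
    rw [Jfun]
    rw [MeasureTheory.integral_eq_lintegral_of_nonneg_ae hnn hmx.aestronglyMeasurable]
    rw [hg]
    congr 1
    exact lintegral_congr fun xs => hFofReal (pts x xs)
  have hbound : ∫⁻ x, g x ≤ M ^ (n + 1) := by
    have hmem0 : Fin.last (n + 1) ∈ Finset.univ.erase (0 : Fin (n + 2)) := by
      refine Finset.mem_erase.mpr ⟨?_, Finset.mem_univ _⟩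
      intro h
      have := congrArg Fin.val h
      simp only [Fin.val_last, Fin.val_zero] at this
      omega
    have hins : insert (Fin.last (n + 1))
        ((Finset.univ.erase (0 : Fin (n + 2))).erase (Fin.last (n + 1)))
        = Finset.univ.erase (0 : Fin (n + 2)) := Finset.insert_erase hmem0
    have hcard : (Finset.univ.erase (0 : Fin (n + 2))).card = n + 1 := by
      rw [Finset.card_erase_of_mem (Finset.mem_univ _), Finset.card_univ, Fintype.card_fin]
      omega
    calc ∫⁻ x, g x ≤ ∫⁻ x, ∫⁻ xs, P (pts x xs) :=
          lintegral_mono fun x => lintegral_mono fun xs => hFP _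
      _ = ∫⁻ x, (∫⋯∫⁻_((Finset.univ.erase (0 : Fin (n + 2))).erase (Fin.last (n + 1))), P)
            (Function.update (fun _ => 0) (Fin.last (n + 1)) x) :=
          lintegral_congr fun x => lintegral_pts_eq_lmarginal P hPmeas x
      _ = (∫⋯∫⁻_(insert (Fin.last (n + 1))
            ((Finset.univ.erase (0 : Fin (n + 2))).erase (Fin.last (n + 1)))), P)
            (fun _ => 0) := by
          rw [lmarginal_insert P hPmeas (Finset.notMem_erase _ _) (fun _ => 0)]
      _ ≤ M ^ (n + 1) := by
          rw [hins]
          have htree := tree_lintegral_bound ℓ hℓmeas M hMne hshift par (G.dist 0)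
            (Finset.univ.erase (0 : Fin (n + 2)))
            (fun v hv => hltpar v (Finset.ne_of_mem_erase hv)) (fun _ => 0)
          rw [hcard] at htree
          rw [hP]
          exact htree
  have hMpow_ne : M ^ (n + 1) ≠ ⊤ := ENNReal.pow_ne_top hMne
  have hJfun_eq : Jfun φ n G = fun x => (g x).toReal := funext hJ
  have haesm : AEStronglyMeasurable (Jfun φ n G) volume := by
    rw [hJfun_eq]
    exact (ENNReal.measurable_toReal.comp hgmeas).aestronglyMeasurable
  have hofReal_le : ∀ x, ENNReal.ofReal (Jfun φ n G x) ≤ g x := by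
    intro x
    rw [hJ x]
    exact ENNReal.ofReal_toReal_le
  have hint : Integrable (Jfun φ n G) := by
    refine ⟨haesm, ?_⟩
    simp_rw [HasFiniteIntegral, hJfun_eq]
    calc ∫⁻ x, (‖(g x).toReal‖₊ : ℝ≥0∞)
        = ∫⁻ x, ENNReal.ofReal ((g x).toReal) :=
          lintegral_congr fun x => Real.enorm_eq_ofReal ENNReal.toReal_nonneg
      _ ≤ ∫⁻ x, g x := lintegral_mono fun x => ENNReal.ofReal_toReal_le
      _ ≤ M ^ (n + 1) := hbound
      _ < ⊤ := lt_top_iff_ne_top.mpr hMpow_ne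
  refine ⟨hint, ?_⟩
  have h1 : ∫ x, Jfun φ n G x = (∫⁻ x, ENNReal.ofReal (Jfun φ n G x)).toReal :=
    MeasureTheory.integral_eq_lintegral_of_nonneg_ae
      (Filter.Eventually.of_forall fun x => by rw [hJ x]; exact ENNReal.toReal_nonneg)
      haesm
  rw [h1]
  have h2 : (∫⁻ x, ENNReal.ofReal (Jfun φ n G x)) ≤ M ^ (n + 1) :=
    le_trans (lintegral_mono fun x => hofReal_le x) hbound
  have h3 := ENNReal.toReal_mono hMpow_ne h2
  calc (∫⁻ x, ENNReal.ofReal (Jfun φ n G x)).toReal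
      ≤ (M ^ (n + 1)).toReal := h3
    _ = m ^ (n + 1) := by
        rw [hMdef, ← ENNReal.ofReal_pow hm0, ENNReal.toReal_ofReal (pow_nonneg hm0 _)]

end
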